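/- Let s > 0, ω ∈ ℝ with ω ≠ 0, and θ ∈ ℝ. Then the integral ∫_0^∞ t^{s−1} e^{−ω² t / cosh²θ} · erfc(√t · ω tanh θ) dt converges and equals ( cosh²θ / ω² )^s · [ Γ(s) − (2/√π) Γ(s + 1/2) · sgn(ω) · sinh θ · ∫_0^1 (1 + v² sinh²θ)^{−(s + 1/2)} dv ]. (The last integral is the Euler-type integral representation of ₂F₁(1/2, s+1/2; 3/2; −sinh²θ).) -/

import Mathlib

open scoped Real
open MeasureTheory

/-- The complementary error function `erfc(x) = (2/√π) ∫_x^∞ e^{−v²} dv`. -/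
noncomputable def erfc (x : ℝ) : ℝ :=
  2 / Real.sqrt π * ∫ v in Set.Ioi x, Real.exp (-v ^ 2)

open Set

lemma gauss_integrable : Integrable (fun v : ℝ => Real.exp (-v ^ 2)) := by
  simpa using integrable_exp_neg_mul_sq (b := 1) one_pos

lemma gauss_total : (∫ v : ℝ, Real.exp (-v ^ 2)) = Real.sqrt π := by
  simpa using integral_gaussian 1

lemma gauss_Ioi : (∫ v in Ioi (0:ℝ), Real.exp (-v ^ 2)) = Real.sqrt π / 2 := by
  simpa using integral_gaussian_Ioi 1

lemma gauss_Ioi_eq (x : ℝ) :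
    (∫ v in Ioi x, Real.exp (-v ^ 2))
      = Real.sqrt π / 2 - ∫ v in (0:ℝ)..x, Real.exp (-v ^ 2) := by
  have h0 : ∀ y : ℝ, (∫ v in Iic y, Real.exp (-v ^ 2)) + (∫ v in Ioi y, Real.exp (-v ^ 2))
      = Real.sqrt π := by
    intro y
    rw [← gauss_total]
    exact intervalIntegral.integral_Iic_add_Ioi gauss_integrable.integrableOn gauss_integrable.integrableOn
  have h1 : (∫ v in (0:ℝ)..x, Real.exp (-v ^ 2))
      = (∫ v in Iic x, Real.exp (-v ^ 2)) - ∫ v in Iic (0:ℝ), Real.exp (-v ^ 2) :=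
    (intervalIntegral.integral_Iic_sub_Iic gauss_integrable.integrableOn
      gauss_integrable.integrableOn).symm
  have h2 := h0 x
  have h3 := h0 0
  rw [gauss_Ioi] at h3
  linarith

lemma erfc_eq (x : ℝ) :
    erfc x = 1 - 2 / Real.sqrt π * ∫ v in (0:ℝ)..x, Real.exp (-v ^ 2) := by
  have hπ : (0:ℝ) < Real.sqrt π := Real.sqrt_pos.2 Real.pi_pos
  rw [erfc, gauss_Ioi_eq, mul_sub]
  congr 1
  field_simp

lemma erfc_nonneg (x : ℝ) : 0 ≤ erfc x := by
  have hπ : (0:ℝ) < Real.sqrt π := Real.sqrt_pos.2 Real.pi_pos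
  apply mul_nonneg (by positivity)
  exact setIntegral_nonneg measurableSet_Ioi fun v _ => (Real.exp_pos _).le

lemma erfc_le_two (x : ℝ) : erfc x ≤ 2 := by
  have hπ : (0:ℝ) < Real.sqrt π := Real.sqrt_pos.2 Real.pi_pos
  have h1 : (∫ v in Ioi x, Real.exp (-v ^ 2)) ≤ Real.sqrt π := by
    rw [← gauss_total]
    exact setIntegral_le_integral gauss_integrable
      (Filter.Eventually.of_forall fun v => (Real.exp_pos _).le)
  calc erfc x ≤ 2 / Real.sqrt π * Real.sqrt π :=
        mul_le_mul_of_nonneg_left h1 (by positivity)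
    _ = 2 := by field_simp

lemma erfc_continuous : Continuous erfc := by
  have h : erfc = fun x => 1 - 2 / Real.sqrt π * ∫ v in (0:ℝ)..x, Real.exp (-v ^ 2) :=
    funext erfc_eq
  rw [h]
  have hc : Continuous fun v : ℝ => Real.exp (-v ^ 2) := by continuity
  exact continuous_const.sub (continuous_const.mul
    (intervalIntegral.continuous_primitive (fun a b => hc.intervalIntegrable a b) 0))

/-- for `s > 0`, `ω ≠ 0`, the integral
`∫_0^∞ t^{s−1} e^{−ω²t/cosh²θ} erfc(√t ω tanh θ) dt` converges and equals
`(cosh²θ/ω²)^s [Γ(s) − (2/√π) Γ(s+1/2) sgn(ω) sinh θ ∫_0^1 (1+v² sinh²θ)^{−(s+1/2)} dv]`. -/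
theorem stmt_12 (s ω θ : ℝ) (hs : 0 < s) (hω : ω ≠ 0) :
    IntegrableOn
      (fun t : ℝ => t ^ (s - 1) * Real.exp (-ω ^ 2 * t / Real.cosh θ ^ 2) *
        erfc (Real.sqrt t * ω * Real.tanh θ))
      (Set.Ioi 0) ∧
    ∫ t in Set.Ioi (0 : ℝ),
        t ^ (s - 1) * Real.exp (-ω ^ 2 * t / Real.cosh θ ^ 2) *
          erfc (Real.sqrt t * ω * Real.tanh θ)
      = (Real.cosh θ ^ 2 / ω ^ 2) ^ s *
        (Real.Gamma s -
          2 / Real.sqrt π * Real.Gamma (s + 1 / 2) * Real.sign ω * Real.sinh θ *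
            ∫ v in (0 : ℝ)..1, (1 + v ^ 2 * Real.sinh θ ^ 2) ^ (-(s + 1 / 2))) := by
  have hπ : (0:ℝ) < Real.sqrt π := Real.sqrt_pos.2 Real.pi_pos
  have hch : (0:ℝ) < Real.cosh θ := Real.cosh_pos θ
  have hω2 : (0:ℝ) < ω ^ 2 := pow_two_pos_of_ne_zero hω
  obtain ⟨a, ha_def⟩ : ∃ a : ℝ, a = ω ^ 2 / Real.cosh θ ^ 2 := ⟨_, rfl⟩
  have ha : 0 < a := by rw [ha_def]; positivity
  obtain ⟨b, hb_def⟩ : ∃ b : ℝ, b = ω * Real.tanh θ := ⟨_, rfl⟩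
  have hb2 : ∀ w : ℝ, b ^ 2 * w ^ 2 = a * (w ^ 2 * Real.sinh θ ^ 2) := by
    intro w
    rw [hb_def, ha_def, Real.tanh_eq_sinh_div_cosh]
    field_simp
  have hfun : (fun t : ℝ => t ^ (s - 1) * Real.exp (-ω ^ 2 * t / Real.cosh θ ^ 2) *
      erfc (Real.sqrt t * ω * Real.tanh θ))
      = fun t : ℝ => t ^ (s - 1) * Real.exp (-(a * t)) * erfc (Real.sqrt t * b) := by
    funext t
    rw [mul_assoc (Real.sqrt t), ← hb_def]
    congr 2
    rw [ha_def]; ring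
  rw [hfun]
  -- integrability of the dominating functions
  have hdom : ∀ q : ℝ, -1 < q →
      IntegrableOn (fun t : ℝ => t ^ q * Real.exp (-(a * t))) (Ioi 0) := by
    intro q hq
    have h := integrableOn_rpow_mul_exp_neg_mul_rpow (p := 1) hq zero_lt_one ha
    refine h.congr_fun (fun t _ => ?_) measurableSet_Ioi
    simp only [Real.rpow_one, neg_mul]
  have hg1 : IntegrableOn (fun t : ℝ => t ^ (s - 1) * Real.exp (-(a * t))) (Ioi 0) :=
    hdom (s - 1) (by linarith)
  have hgh : IntegrableOn (fun t : ℝ => t ^ (s - 1/2) * Real.exp (-(a * t))) (Ioi 0) :=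
    hdom (s - 1/2) (by linarith)
  -- measurability of the main integrand
  have hFcont : ContinuousOn
      (fun t : ℝ => t ^ (s - 1) * Real.exp (-(a * t)) * erfc (Real.sqrt t * b)) (Ioi 0) := by
    apply ContinuousOn.mul
    apply ContinuousOn.mul
    · exact continuousOn_id.rpow_const fun t ht => Or.inl (ne_of_gt ht)
    · exact (Real.continuous_exp.comp (continuous_const.mul continuous_id).neg).continuousOn
    · exact (erfc_continuous.comp (Real.continuous_sqrt.mul continuous_const)).continuousOn
  have hFmeas : AEStronglyMeasurable
      (fun t : ℝ => t ^ (s - 1) * Real.exp (-(a * t)) * erfc (Real.sqrt t * b))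
      (volume.restrict (Ioi 0)) :=
    hFcont.aestronglyMeasurable measurableSet_Ioi
  -- integrability of the main integrand
  have hF : IntegrableOn
      (fun t : ℝ => t ^ (s - 1) * Real.exp (-(a * t)) * erfc (Real.sqrt t * b)) (Ioi 0) := by
    apply Integrable.mono' (hg1.mul_const 2) hFmeas
    filter_upwards [self_mem_ae_restrict measurableSet_Ioi] with t ht
    have h1 : (0:ℝ) ≤ t ^ (s - 1) := Real.rpow_nonneg (le_of_lt ht) _
    have h2 : (0:ℝ) ≤ t ^ (s - 1) * Real.exp (-(a * t)) :=
      mul_nonneg h1 (Real.exp_pos _).le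
    rw [Real.norm_eq_abs, abs_of_nonneg (mul_nonneg h2 (erfc_nonneg _))]
    exact mul_le_mul_of_nonneg_left (erfc_le_two _) h2
  refine ⟨hF, ?_⟩
  rw [intervalIntegral.integral_of_le zero_le_one]
  obtain ⟨J, hJ_def⟩ : ∃ J : ℝ,
      J = ∫ v in Ioc (0:ℝ) 1, (1 + v ^ 2 * Real.sinh θ ^ 2) ^ (-(s + 1/2)) := ⟨_, rfl⟩
  rw [← hJ_def]
  -- pointwise decomposition
  have key : ∀ t ∈ Ioi (0:ℝ),
      t ^ (s - 1) * Real.exp (-(a * t)) * erfc (Real.sqrt t * b)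
      = t ^ (s - 1) * Real.exp (-(a * t))
        - 2 / Real.sqrt π * (b * ∫ w in Ioc (0:ℝ) 1, t ^ (s - 1/2) * Real.exp (-((a + b ^ 2 * w ^ 2) * t))) := by
    intro t ht
    have hsub : (∫ v in (0:ℝ)..(Real.sqrt t * b), Real.exp (-v ^ 2))
        = Real.sqrt t * b * ∫ w in (0:ℝ)..1, Real.exp (-(b ^ 2 * w ^ 2 * t)) := by
      rcases eq_or_ne b 0 with hb0 | hb0
      · simp [hb0]
      · have hcne : Real.sqrt t * b ≠ 0 := mul_ne_zero (ne_of_gt (Real.sqrt_pos.2 ht)) hb0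
        have h := intervalIntegral.integral_comp_mul_right (a := (0:ℝ)) (b := 1)
          (fun v => Real.exp (-v ^ 2)) hcne
        rw [zero_mul, one_mul, smul_eq_mul] at h
        have h2 : ∀ w : ℝ, Real.exp (-(w * (Real.sqrt t * b)) ^ 2)
            = Real.exp (-(b ^ 2 * w ^ 2 * t)) := by
          intro w
          congr 1
          have hsq : (w * (Real.sqrt t * b)) ^ 2 = b ^ 2 * w ^ 2 * t := by
            rw [mul_pow, mul_pow, Real.sq_sqrt ht.le]; ring
          rw [hsq]
        simp only [h2] at h
        rw [h, ← mul_assoc, mul_inv_cancel₀ hcne, one_mul]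
    rw [erfc_eq, hsub, intervalIntegral.integral_of_le zero_le_one]
    have hinner : (∫ w in Ioc (0:ℝ) 1, t ^ (s - 1/2) * Real.exp (-((a + b ^ 2 * w ^ 2) * t)))
        = t ^ (s - 1/2) * Real.exp (-(a * t)) * ∫ w in Ioc (0:ℝ) 1,
            Real.exp (-(b ^ 2 * w ^ 2 * t)) := by
      rw [← MeasureTheory.integral_const_mul]
      refine setIntegral_congr_fun measurableSet_Ioc fun w _ => ?_
      rw [mul_assoc, ← Real.exp_add]
      congr 1
      ring
    have hpow : t ^ (s - 1/2) = t ^ (s - 1) * Real.sqrt t := by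
      rw [Real.sqrt_eq_rpow, ← Real.rpow_add ht]
      congr 1
      ring
    rw [hinner, hpow]
    ring
  -- the product-integrability for Fubini
  have hf2m : AEStronglyMeasurable
      (Function.uncurry fun t w : ℝ => t ^ (s - 1/2) * Real.exp (-((a + b ^ 2 * w ^ 2) * t)))
      ((volume.restrict (Ioi (0:ℝ))).prod (volume.restrict (Ioc (0:ℝ) 1))) := by
    have hco : ContinuousOn
        (Function.uncurry fun t w : ℝ => t ^ (s - 1/2) * Real.exp (-((a + b ^ 2 * w ^ 2) * t)))
        (Ioi (0:ℝ) ×ˢ Ioc (0:ℝ) 1) := by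
      apply ContinuousOn.mul
      · exact continuous_fst.continuousOn.rpow_const fun p hp => Or.inl (ne_of_gt hp.1)
      · exact (Real.continuous_exp.comp (((continuous_const.add
          (continuous_const.mul (continuous_snd.pow 2))).mul continuous_fst).neg)).continuousOn
    have := hco.aestronglyMeasurable (μ := (volume : Measure (ℝ × ℝ))) (measurableSet_Ioi.prod measurableSet_Ioc)
    rwa [Measure.volume_eq_prod, ← Measure.prod_restrict] at this
  have hprod : Integrable
      (Function.uncurry fun t w : ℝ => t ^ (s - 1/2) * Real.exp (-((a + b ^ 2 * w ^ 2) * t)))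
      ((volume.restrict (Ioi (0:ℝ))).prod (volume.restrict (Ioc (0:ℝ) 1))) := by
    rw [integrable_prod_iff hf2m]
    constructor
    · refine Filter.Eventually.of_forall fun t => ?_
      apply Continuous.integrableOn_Ioc
      show Continuous fun w : ℝ => t ^ (s - 1/2) * Real.exp (-((a + b ^ 2 * w ^ 2) * t))
      exact continuous_const.mul (Real.continuous_exp.comp (((continuous_const.add
        (continuous_const.mul (continuous_pow 2))).mul continuous_const).neg))
    · have hb3 : ∀ᵐ t ∂(volume.restrict (Ioi (0:ℝ))),
          ‖∫ w in Ioc (0:ℝ) 1,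
            ‖(Function.uncurry fun t w : ℝ =>
              t ^ (s - 1/2) * Real.exp (-((a + b ^ 2 * w ^ 2) * t))) (t, w)‖‖
          ≤ t ^ (s - 1/2) * Real.exp (-(a * t)) := by
        filter_upwards [self_mem_ae_restrict measurableSet_Ioi] with t ht
        have h1 : (0:ℝ) ≤ t ^ (s - 1/2) := Real.rpow_nonneg (le_of_lt ht) _
        have hnorm : ∀ w : ℝ,
            ‖(Function.uncurry fun t w : ℝ =>
              t ^ (s - 1/2) * Real.exp (-((a + b ^ 2 * w ^ 2) * t))) (t, w)‖
            = t ^ (s - 1/2) * Real.exp (-((a + b ^ 2 * w ^ 2) * t)) := by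
          intro w
          rw [Function.uncurry_apply_pair, Real.norm_eq_abs,
            abs_of_nonneg (mul_nonneg h1 (Real.exp_pos _).le)]
        rw [Real.norm_eq_abs, abs_of_nonneg]
        · calc (∫ w in Ioc (0:ℝ) 1,
              ‖(Function.uncurry fun t w : ℝ =>
                t ^ (s - 1/2) * Real.exp (-((a + b ^ 2 * w ^ 2) * t))) (t, w)‖)
              = ∫ w in Ioc (0:ℝ) 1, t ^ (s - 1/2) * Real.exp (-((a + b ^ 2 * w ^ 2) * t)) := by
                simp only [hnorm]
            _ ≤ ∫ _w in Ioc (0:ℝ) 1, t ^ (s - 1/2) * Real.exp (-(a * t)) := by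
                apply setIntegral_mono_on
                · apply Continuous.integrableOn_Ioc
                  exact continuous_const.mul (Real.continuous_exp.comp (((continuous_const.add
                    (continuous_const.mul (continuous_pow 2))).mul continuous_const).neg))
                · exact continuous_const.integrableOn_Ioc
                · exact measurableSet_Ioc
                · intro w _
                  apply mul_le_mul_of_nonneg_left _ h1
                  apply Real.exp_le_exp.2
                  nlinarith [mul_nonneg (mul_nonneg (sq_nonneg b) (sq_nonneg w)) (le_of_lt ht)]
            _ = t ^ (s - 1/2) * Real.exp (-(a * t)) := by
                rw [setIntegral_const, Real.volume_real_Ioc]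
                norm_num
        · exact integral_nonneg fun w => norm_nonneg _
      exact Integrable.mono' hgh hf2m.norm.integral_prod_right' hb3
  have hswap := MeasureTheory.integral_integral_swap
    (f := fun t w : ℝ => t ^ (s - 1/2) * Real.exp (-((a + b ^ 2 * w ^ 2) * t))) hprod
  have hGint : Integrable
      (fun t : ℝ => ∫ w in Ioc (0:ℝ) 1, t ^ (s - 1/2) * Real.exp (-((a + b ^ 2 * w ^ 2) * t)))
      (volume.restrict (Ioi (0:ℝ))) := hprod.integral_prod_left
  -- inner Gamma evaluation
  have hGamma : ∀ w : ℝ,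
      (∫ t in Ioi (0:ℝ), t ^ (s - 1/2) * Real.exp (-((a + b ^ 2 * w ^ 2) * t)))
      = (1/(a + b ^ 2 * w ^ 2)) ^ (s + 1/2) * Real.Gamma (s + 1/2) := by
    intro w
    have hpos : 0 < a + b ^ 2 * w ^ 2 := by positivity
    have h := Real.integral_rpow_mul_exp_neg_mul_Ioi
      (a := s + 1/2) (r := a + b ^ 2 * w ^ 2) (by linarith) hpos
    rw [show s + 1/2 - 1 = s - 1/2 by ring] at h
    exact h
  have hfinal2 : (∫ w in Ioc (0:ℝ) 1, (1/(a + b ^ 2 * w ^ 2)) ^ (s + 1/2) * Real.Gamma (s + 1/2))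
      = (1/a) ^ (s + 1/2) * Real.Gamma (s + 1/2) * J := by
    rw [hJ_def, ← MeasureTheory.integral_const_mul]
    refine setIntegral_congr_fun measurableSet_Ioc fun w _ => ?_
    have h1X : (0:ℝ) < 1 + w ^ 2 * Real.sinh θ ^ 2 := by positivity
    rw [hb2 w, show a + a * (w ^ 2 * Real.sinh θ ^ 2)
      = a * (1 + w ^ 2 * Real.sinh θ ^ 2) by ring]
    simp only [one_div]
    rw [mul_inv, Real.mul_rpow (inv_nonneg.2 ha.le) (inv_nonneg.2 h1X.le),
      Real.inv_rpow h1X.le, ← Real.rpow_neg h1X.le]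
    ring
  have hG : (∫ t in Ioi (0:ℝ), ∫ w in Ioc (0:ℝ) 1,
        t ^ (s - 1/2) * Real.exp (-((a + b ^ 2 * w ^ 2) * t)))
      = (1/a) ^ (s + 1/2) * Real.Gamma (s + 1/2) * J := by
    rw [hswap, setIntegral_congr_fun measurableSet_Ioc fun w _ => hGamma w]
    exact hfinal2
  -- assemble the integral
  have hInt : (∫ t in Ioi (0:ℝ), t ^ (s - 1) * Real.exp (-(a * t)) * erfc (Real.sqrt t * b))
      = (1/a) ^ s * Real.Gamma s
        - 2 / Real.sqrt π * (b * ((1/a) ^ (s + 1/2) * Real.Gamma (s + 1/2) * J)) := by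
    rw [setIntegral_congr_fun measurableSet_Ioi key]
    rw [integral_sub hg1 ((hGint.const_mul b).const_mul (2 / Real.sqrt π))]
    rw [MeasureTheory.integral_const_mul, MeasureTheory.integral_const_mul]
    rw [Real.integral_rpow_mul_exp_neg_mul_Ioi hs ha, hG]
  rw [hInt]
  -- final scalar identity
  have hA : Real.cosh θ ^ 2 / ω ^ 2 = 1/a := by
    rw [ha_def]; field_simp
  have hApos : (0:ℝ) < 1/a := by positivity
  rw [hA, Real.rpow_add hApos]
  have hhalf : ((1:ℝ)/a) ^ ((1:ℝ)/2) = Real.cosh θ / |ω| := by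
    rw [← Real.sqrt_eq_rpow, ← hA, Real.sqrt_div (sq_nonneg _), Real.sqrt_sq hch.le,
      Real.sqrt_sq_eq_abs]
  have hsign : b * (Real.cosh θ / |ω|) = Real.sign ω * Real.sinh θ := by
    have h1 : b * (Real.cosh θ / |ω|) = ω / |ω| * Real.sinh θ := by
      rw [hb_def, Real.tanh_eq_sinh_div_cosh]
      field_simp [abs_ne_zero.2 hω, ne_of_gt hch]
    rw [h1]
    congr 1
    rcases hω.lt_or_gt with h | h
    · rw [Real.sign_of_neg h, abs_of_neg h, div_neg, div_self hω]
    · rw [Real.sign_of_pos h, abs_of_pos h, div_self hω]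
  have hkey : b * ((1:ℝ)/a) ^ ((1:ℝ)/2) = Real.sign ω * Real.sinh θ := by
    rw [hhalf]; exact hsign
  linear_combination (-(2 / Real.sqrt π * Real.Gamma (s + 1/2) * J * (1/a) ^ s)) * hkey
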